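/- Let A be a C*-algebra, a ∈ A⁺, and let A_a := {x ∈ A : ∃ k > 0, [[ka, x], [x*, ka]] ≥ 0 in M₂(A)}. If v ∈ A⁺ and v ≤ w for some w ∈ A_a ∩ A⁺, then v ∈ A_a (i.e., A_a is an order ideal). -/

import Mathlib

variable {A : Type*} [NonUnitalCStarAlgebra A]

/-- Positivity in the C*-algebra `M₂(A)`: an element of a C*-algebra is positive
iff it is of the form `star y * y`. -/
def M2Pos (m : Matrix (Fin 2) (Fin 2) A) : Prop := ∃ y, m = star y * y
variable [PartialOrder A] [StarOrderedRing A]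

private lemma exists_sqrt' (x : A) (hx : 0 ≤ x) : ∃ s : A, x = star s * s :=
  ⟨CFC.sqrt x, by rw [(IsSelfAdjoint.of_nonneg (CFC.sqrt_nonneg x)).star_eq, CFC.sqrt_mul_sqrt_self x hx]⟩

private lemma rsmul_nonneg' (k : ℝ) (hk : 0 ≤ k) (x : A) (hx : 0 ≤ x) : 0 ≤ k • x := by
  obtain ⟨s, rfl⟩ := exists_sqrt' x hx
  have : k • (star s * s) = star (Real.sqrt k • s) * (Real.sqrt k • s) := by
    simp only [star_smul, star_trivial, smul_mul_smul_comm, Real.mul_self_sqrt hk]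
  rw [this]
  exact star_mul_self_nonneg _

theorem stmt_14 (a : A) (ha : 0 ≤ a) (v w : A) (hv : 0 ≤ v) (hw : 0 ≤ w)
    (hwa : w ∈ {x : A | ∃ k : ℝ, 0 < k ∧ M2Pos !![k • a, x; star x, k • a]})
    (hvw : v ≤ w) :
    v ∈ {x : A | ∃ k : ℝ, 0 < k ∧ M2Pos !![k • a, x; star x, k • a]} := by
  obtain ⟨k, hk, z, hz⟩ := hwa
  have hsw : star w = w := (IsSelfAdjoint.of_nonneg hw).star_eq
  have hsv : star v = v := (IsSelfAdjoint.of_nonneg hv).star_eq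
  have e : ∀ i j, !![k • a, w; star w, k • a] i j = star (z 0 i) * z 0 j + star (z 1 i) * z 1 j := by
    intro i j
    rw [hz]
    simp [Matrix.mul_apply, Matrix.star_apply, Fin.sum_univ_two]
  have h00 : k • a = star (z 0 0) * z 0 0 + star (z 1 0) * z 1 0 := by simpa using e 0 0
  have h01 : w = star (z 0 0) * z 0 1 + star (z 1 0) * z 1 1 := by simpa using e 0 1
  have h10 : star w = star (z 0 1) * z 0 0 + star (z 1 1) * z 1 0 := by simpa using e 1 0
  have h11 : k • a = star (z 0 1) * z 0 1 + star (z 1 1) * z 1 1 := by simpa using e 1 1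
  -- conjugation by (1, -1): 2w ≤ 2(k•a)
  have expand : star (z 0 0 - z 0 1) * (z 0 0 - z 0 1) + star (z 1 0 - z 1 1) * (z 1 0 - z 1 1)
      = (star (z 0 0) * z 0 0 + star (z 1 0) * z 1 0) - (star (z 0 0) * z 0 1 + star (z 1 0) * z 1 1)
        - (star (z 0 1) * z 0 0 + star (z 1 1) * z 1 0)
        + (star (z 0 1) * z 0 1 + star (z 1 1) * z 1 1) := by
    simp only [star_sub, sub_mul, mul_sub]
    abel
  rw [← h00, ← h01, ← h10, ← h11, hsw] at expand
  have hkey : w + w ≤ k • a + k • a := by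
    rw [← sub_nonneg]
    have : k • a + k • a - (w + w) =
        star (z 0 0 - z 0 1) * (z 0 0 - z 0 1) + star (z 1 0 - z 1 1) * (z 1 0 - z 1 1) := by
      rw [expand]; abel
    rw [this]
    exact add_nonneg (star_mul_self_nonneg _) (star_mul_self_nonneg _)
  -- now use k' = 2k
  refine ⟨2 * k, by linarith, ?_⟩
  have hva : v ≤ (2 * k) • a := by
    calc v ≤ w := hvw
    _ ≤ w + w := le_add_of_nonneg_right hw
    _ ≤ k • a + k • a := hkey
    _ = (2 * k) • a := by rw [two_mul, add_smul]
  obtain ⟨p, hp⟩ := exists_sqrt' ((2 * k) • a + v)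
    (add_nonneg (rsmul_nonneg' _ (by linarith) a ha) hv)
  obtain ⟨q, hq⟩ := exists_sqrt' ((2 * k) • a - v) (sub_nonneg.mpr hva)
  set s : ℝ := (Real.sqrt 2)⁻¹ with hs
  have hss : s * s = 2⁻¹ := by
    rw [hs, ← mul_inv, Real.mul_self_sqrt (by norm_num)]
  refine ⟨!![s • p, s • p; s • q, -(s • q)], ?_⟩
  ext i j
  fin_cases i <;> fin_cases j <;>
    simp [Matrix.mul_apply, Matrix.star_apply, Fin.sum_univ_two, star_smul,
      smul_mul_smul_comm, hss, hsv] <;>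
    (rw [← hp, ← hq]; module)
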